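/- Let λ0, λ1 > 0 and set 2λ = λ0 + λ1. Let F0, F1, p0, p1 : [0,∞) → ℝ be continuous functions such that for all t ≥ 0: p0(t) = e^{−λ0 t} F0(t) + ∫_0^t λ0 e^{−λ0 τ} p1(t−τ) dτ and p1(t) = e^{−λ1 t} F1(t) + ∫_0^t λ1 e^{−λ1 τ} p0(t−τ) dτ. Then for all t ≥ 0: p0(t) = e^{−λ0 t} F0(t) + λ0 λ1 ∫_0^t [B00(t−τ) e^{−λ0 τ} F0(τ) + B01(t−τ) e^{−λ1 τ} F1(τ)] dτ and p1(t) = e^{−λ1 t} F1(t) + λ0 λ1 ∫_0^t [B10(t−τ) e^{−λ0 τ} F0(τ) + B11(t−τ) e^{−λ1 τ} F1(τ)] dτ. -/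

import Mathlib

open Real MeasureTheory intervalIntegral

lemma my_ftc (f : ℝ → ℝ) (hf : Continuous f) (t : ℝ) :
    HasDerivAt (fun u => ∫ x in (0:ℝ)..u, f x) (f t) t :=
  intervalIntegral.integral_hasDerivAt_right (hf.intervalIntegrable _ _)
    hf.stronglyMeasurable.stronglyMeasurableAtFilter hf.continuousAt

noncomputable def Iv (c : ℝ) (F : ℝ → ℝ) (u : ℝ) : ℝ := ∫ τ in (0:ℝ)..u, Real.exp (c * τ) * F τ

lemma Iv_deriv (c : ℝ) (F : ℝ → ℝ) (hF : Continuous F) (t : ℝ) :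
    HasDerivAt (Iv c F) (Real.exp (c * t) * F t) t := by
  unfold Iv; exact my_ftc _ (by fun_prop) t

lemma Iv_cont (c : ℝ) (F : ℝ → ℝ) (hF : Continuous F) : Continuous (Iv c F) :=
  continuous_iff_continuousAt.2 fun t => (Iv_deriv c F hF t).differentiableAt.continuousAt

lemma Iv_zero (c : ℝ) (F : ℝ → ℝ) : Iv c F 0 = 0 := by
  unfold Iv; exact intervalIntegral.integral_same

lemma Iv_intable (c : ℝ) (F : ℝ → ℝ) (hF : Continuous F) (a b : ℝ) :
    IntervalIntegrable (fun τ => Real.exp (c * τ) * F τ) MeasureTheory.volume a b :=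
  (by fun_prop : Continuous fun τ => Real.exp (c * τ) * F τ).intervalIntegrable _ _

lemma hexp (c t : ℝ) : HasDerivAt (fun u => Real.exp (c * u)) (c * Real.exp (c * t)) t := by
  simpa [mul_comm] using ((hasDerivAt_id t).const_mul c).exp

lemma cov (c : ℝ) (q : ℝ → ℝ) (t : ℝ) :
    (∫ τ in (0:ℝ)..t, c * Real.exp (-c * τ) * q (t - τ)) = c * Real.exp (-c * t) * Iv c q t := by
  have h1 : (∫ τ in (0:ℝ)..t, c * Real.exp (-c * τ) * q (t - τ))
      = ∫ τ in (0:ℝ)..t, (fun σ => c * Real.exp (-c * t) * (Real.exp (c * σ) * q σ)) (t - τ) := by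
    apply intervalIntegral.integral_congr
    intro τ _
    have h : Real.exp (-c * τ) = Real.exp (-c * t) * Real.exp (c * (t - τ)) := by
      rw [← Real.exp_add]; ring_nf
    simp only [h]; ring
  have h2 := intervalIntegral.integral_comp_sub_left
      (a := (0:ℝ)) (b := t) (fun σ => c * Real.exp (-c * t) * (Real.exp (c * σ) * q σ)) t
  simp only [sub_self, sub_zero] at h2
  rw [h1, h2]
  unfold Iv
  rw [intervalIntegral.integral_const_mul]

noncomputable def Ahat (l0 l1 : ℝ) (F0 F1 : ℝ → ℝ) : ℝ → ℝ := fun u =>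
  (l1 * Real.exp (l0 * u) * (Iv (-l0) F0 u + Iv (-l1) F1 u)
    - l1 * Real.exp (-l1 * u) * Iv l1 F0 u
    + l0 * Real.exp (-l1 * u) * Iv l0 F1 u) / (l0 + l1)

lemma Ahat_zero (l0 l1 : ℝ) (F0 F1 : ℝ → ℝ) : Ahat l0 l1 F0 F1 0 = 0 := by
  simp [Ahat, Iv_zero]

lemma Ahat_deriv (l0 l1 : ℝ) (hl0 : 0 < l0) (hl1 : 0 < l1) (F0 F1 : ℝ → ℝ)
    (hF0 : Continuous F0) (hF1 : Continuous F1) (t : ℝ) :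
    HasDerivAt (Ahat l0 l1 F0 F1)
      (Real.exp ((l0 - l1) * t) * (F1 t + l1 * Ahat l1 l0 F1 F0 t)) t := by
  have h0 := Iv_deriv (-l0) F0 hF0 t
  have h1 := Iv_deriv (-l1) F1 hF1 t
  have h2 := Iv_deriv l1 F0 hF0 t
  have h3 := Iv_deriv l0 F1 hF1 t
  have H := (((((hexp l0 t).const_mul l1).mul (h0.add h1)).sub
      (((hexp (-l1) t).const_mul l1).mul h2)).add
      (((hexp (-l1) t).const_mul l0).mul h3)).div_const (l0 + l1)
  refine H.congr_deriv ?_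
  unfold Ahat
  have hs : (0:ℝ) < l0 + l1 := by linarith
  simp only [neg_mul, Real.exp_neg, sub_mul, Real.exp_sub, Pi.add_apply]
  have hs' : (0:ℝ) < l1 + l0 := by linarith
  field_simp [hs.ne', hs'.ne']
  ring

noncomputable def vf (l0 l1 b : ℝ) (F0 F1 : ℝ → ℝ) : ℝ → ℝ × ℝ → ℝ × ℝ := fun u x =>
  (Real.exp ((l0 - l1) * (max 0 (min u b))) * (F1 (max 0 (min u b)) + l1 * x.2),
   Real.exp ((l1 - l0) * (max 0 (min u b))) * (F0 (max 0 (min u b)) + l0 * x.1))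

lemma vf_eq (l0 l1 b : ℝ) (F0 F1 : ℝ → ℝ) {u : ℝ} (h0 : 0 ≤ u) (hb : u ≤ b) (x : ℝ × ℝ) :
    vf l0 l1 b F0 F1 u x
      = (Real.exp ((l0 - l1) * u) * (F1 u + l1 * x.2),
         Real.exp ((l1 - l0) * u) * (F0 u + l0 * x.1)) := by
  unfold vf
  rw [min_eq_left hb, max_eq_right h0]

lemma vf_lip (l0 l1 b : ℝ) (hl0 : 0 < l0) (hl1 : 0 < l1) (hb : 0 ≤ b) (F0 F1 : ℝ → ℝ) (u : ℝ) :
    LipschitzWith ⟨(l0 + l1) * Real.exp (|l0 - l1| * b), by positivity⟩ (vf l0 l1 b F0 F1 u) := by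
  apply LipschitzWith.of_dist_le_mul
  intro p q
  set c := max 0 (min u b) with hc
  have hc0 : 0 ≤ c := le_max_left _ _
  have hcb : c ≤ b := max_le hb (min_le_right _ _)
  have h1 : Real.exp ((l0 - l1) * c) ≤ Real.exp (|l0 - l1| * b) :=
    Real.exp_le_exp.2 (le_trans (mul_le_mul_of_nonneg_right (le_abs_self _) hc0)
      (mul_le_mul_of_nonneg_left hcb (abs_nonneg _)))
  have h2 : Real.exp ((l1 - l0) * c) ≤ Real.exp (|l0 - l1| * b) := by
    refine Real.exp_le_exp.2 (le_trans (mul_le_mul_of_nonneg_right ?_ hc0)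
      (mul_le_mul_of_nonneg_left hcb (abs_nonneg _)))
    rw [abs_sub_comm]; exact le_abs_self _
  have hd1 : (0:ℝ) ≤ |p.1 - q.1| := abs_nonneg _
  have hd2 : (0:ℝ) ≤ |p.2 - q.2| := abs_nonneg _
  have hmax1 : |p.1 - q.1| ≤ max |p.1 - q.1| |p.2 - q.2| := le_max_left _ _
  have hmax2 : |p.2 - q.2| ≤ max |p.1 - q.1| |p.2 - q.2| := le_max_right _ _
  rw [Prod.dist_eq, Prod.dist_eq]
  change _ ≤ (l0 + l1) * Real.exp (|l0 - l1| * b) * _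
  simp only [vf, Real.dist_eq, ← hc]
  apply max_le
  · have e1 : Real.exp ((l0 - l1) * c) * (F1 c + l1 * p.2)
        - Real.exp ((l0 - l1) * c) * (F1 c + l1 * q.2)
        = Real.exp ((l0 - l1) * c) * l1 * (p.2 - q.2) := by ring
    rw [e1, abs_mul, abs_of_pos (by positivity : (0:ℝ) < Real.exp ((l0 - l1) * c) * l1)]
    have A : Real.exp ((l0 - l1) * c) * |p.2 - q.2|
        ≤ Real.exp (|l0 - l1| * b) * max |p.1 - q.1| |p.2 - q.2| :=
      mul_le_mul h1 hmax2 hd2 (Real.exp_pos _).le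
    nlinarith [mul_le_mul_of_nonneg_left A hl1.le,
      mul_nonneg (Real.exp_pos (|l0 - l1| * b)).le (le_trans hd2 hmax2), hl0]
  · have e2 : Real.exp ((l1 - l0) * c) * (F0 c + l0 * p.1)
        - Real.exp ((l1 - l0) * c) * (F0 c + l0 * q.1)
        = Real.exp ((l1 - l0) * c) * l0 * (p.1 - q.1) := by ring
    rw [e2, abs_mul, abs_of_pos (by positivity : (0:ℝ) < Real.exp ((l1 - l0) * c) * l0)]
    have A : Real.exp ((l1 - l0) * c) * |p.1 - q.1|
        ≤ Real.exp (|l0 - l1| * b) * max |p.1 - q.1| |p.2 - q.2| :=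
      mul_le_mul h2 hmax1 hd1 (Real.exp_pos _).le
    nlinarith [mul_le_mul_of_nonneg_left A hl0.le,
      mul_nonneg (Real.exp_pos (|l0 - l1| * b)).le (le_trans hd1 hmax1), hl1]

lemma key (l0 l1 : ℝ) (hl0 : 0 < l0) (hl1 : 0 < l1)
    (F0 F1 p0 p1 : ℝ → ℝ)
    (hF0 : Continuous F0) (hF1 : Continuous F1) (hp0 : Continuous p0) (hp1 : Continuous p1)
    (heq0 : ∀ t, 0 ≤ t → p0 t = Real.exp (-l0 * t) * F0 t
        + ∫ τ in (0:ℝ)..t, l0 * Real.exp (-l0 * τ) * p1 (t - τ))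
    (heq1 : ∀ t, 0 ≤ t → p1 t = Real.exp (-l1 * t) * F1 t
        + ∫ τ in (0:ℝ)..t, l1 * Real.exp (-l1 * τ) * p0 (t - τ)) :
    ∀ t, 0 ≤ t → p0 t = Real.exp (-l0 * t) * F0 t
      + l0 * l1 * ∫ τ in (0:ℝ)..t,
          ((1 - Real.exp (-(l0 + l1) * (t - τ))) / (l0 + l1) * Real.exp (-l0 * τ) * F0 τ
            + (1 + (l0 / l1) * Real.exp (-(l0 + l1) * (t - τ))) / (l0 + l1)
              * Real.exp (-l1 * τ) * F1 τ) := by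
  have hs : (0:ℝ) < l0 + l1 := by linarith
  have heq0' : ∀ u, 0 ≤ u → p0 u
      = Real.exp (-l0 * u) * F0 u + l0 * Real.exp (-l0 * u) * Iv l0 p1 u := by
    intro u hu; rw [heq0 u hu, cov]
  have heq1' : ∀ u, 0 ≤ u → p1 u
      = Real.exp (-l1 * u) * F1 u + l1 * Real.exp (-l1 * u) * Iv l1 p0 u := by
    intro u hu; rw [heq1 u hu, cov]
  intro t ht
  have main : Iv l0 p1 t = Ahat l0 l1 F0 F1 t := by
    have hAc : Continuous (Ahat l0 l1 F0 F1) := continuous_iff_continuousAt.2 fun u =>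
      (Ahat_deriv l0 l1 hl0 hl1 F0 F1 hF0 hF1 u).differentiableAt.continuousAt
    have hCc : Continuous (Ahat l1 l0 F1 F0) := continuous_iff_continuousAt.2 fun u =>
      (Ahat_deriv l1 l0 hl1 hl0 F1 F0 hF1 hF0 u).differentiableAt.continuousAt
    have hODE := ODE_solution_unique (v := vf l0 l1 t F0 F1)
      (K := ⟨(l0 + l1) * Real.exp (|l0 - l1| * t), by positivity⟩)
      (f := fun u => (Iv l0 p1 u, Iv l1 p0 u))
      (g := fun u => (Ahat l0 l1 F0 F1 u, Ahat l1 l0 F1 F0 u))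
      (a := 0) (b := t)
      (fun u => vf_lip l0 l1 t hl0 hl1 ht F0 F1 u)
      (((Iv_cont l0 p1 hp1).prodMk (Iv_cont l1 p0 hp0)).continuousOn)
      ?_
      ((hAc.prodMk hCc).continuousOn)
      ?_
      ?_
    · have := hODE (Set.right_mem_Icc.2 ht)
      exact congrArg Prod.fst this
    · intro u hu
      rw [vf_eq l0 l1 t F0 F1 hu.1 hu.2.le]
      have hA : HasDerivAt (Iv l0 p1)
          (Real.exp ((l0 - l1) * u) * (F1 u + l1 * Iv l1 p0 u)) u := by
        have h := Iv_deriv l0 p1 hp1 u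
        have e : Real.exp (l0 * u) * p1 u
            = Real.exp ((l0 - l1) * u) * (F1 u + l1 * Iv l1 p0 u) := by
          rw [heq1' u hu.1]
          simp only [neg_mul, Real.exp_neg, sub_mul, Real.exp_sub]
          field_simp
        rwa [e] at h
      have hC : HasDerivAt (Iv l1 p0)
          (Real.exp ((l1 - l0) * u) * (F0 u + l0 * Iv l0 p1 u)) u := by
        have h := Iv_deriv l1 p0 hp0 u
        have e : Real.exp (l1 * u) * p0 u
            = Real.exp ((l1 - l0) * u) * (F0 u + l0 * Iv l0 p1 u) := by
          rw [heq0' u hu.1]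
          simp only [neg_mul, Real.exp_neg, sub_mul, Real.exp_sub]
          field_simp
        rwa [e] at h
      exact (hA.prodMk hC).hasDerivWithinAt
    · intro u hu
      rw [vf_eq l0 l1 t F0 F1 hu.1 hu.2.le]
      exact ((Ahat_deriv l0 l1 hl0 hl1 F0 F1 hF0 hF1 u).prodMk
        (Ahat_deriv l1 l0 hl1 hl0 F1 F0 hF1 hF0 u)).hasDerivWithinAt
    · simp only [Iv_zero, Ahat_zero]
  have h1 := Iv_intable (-l0) F0 hF0 0 t
  have h2 := Iv_intable l1 F0 hF0 0 t
  have h3 := Iv_intable (-l1) F1 hF1 0 t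
  have h4 := Iv_intable l0 F1 hF1 0 t
  have hsplit : (∫ τ in (0:ℝ)..t,
        ((1 - Real.exp (-(l0 + l1) * (t - τ))) / (l0 + l1) * Real.exp (-l0 * τ) * F0 τ
          + (1 + (l0 / l1) * Real.exp (-(l0 + l1) * (t - τ))) / (l0 + l1)
            * Real.exp (-l1 * τ) * F1 τ))
      = ((1 / (l0 + l1)) * Iv (-l0) F0 t
          - (Real.exp (-(l0 + l1) * t) / (l0 + l1)) * Iv l1 F0 t)
        + ((1 / (l0 + l1)) * Iv (-l1) F1 t
          + ((l0 / l1) * (Real.exp (-(l0 + l1) * t) / (l0 + l1))) * Iv l0 F1 t) := by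
    rw [show (fun τ =>
        (1 - Real.exp (-(l0 + l1) * (t - τ))) / (l0 + l1) * Real.exp (-l0 * τ) * F0 τ
          + (1 + (l0 / l1) * Real.exp (-(l0 + l1) * (t - τ))) / (l0 + l1)
            * Real.exp (-l1 * τ) * F1 τ)
      = fun τ =>
        ((1 / (l0 + l1)) * (Real.exp (-l0 * τ) * F0 τ)
          - (Real.exp (-(l0 + l1) * t) / (l0 + l1)) * (Real.exp (l1 * τ) * F0 τ))
        + ((1 / (l0 + l1)) * (Real.exp (-l1 * τ) * F1 τ)
          + ((l0 / l1) * (Real.exp (-(l0 + l1) * t) / (l0 + l1)))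
            * (Real.exp (l0 * τ) * F1 τ)) from funext fun τ => by
      have hX1 : Real.exp (-(l0 + l1) * (t - τ)) * Real.exp (-l0 * τ)
          = Real.exp (-(l0 + l1) * t) * Real.exp (l1 * τ) := by
        rw [← Real.exp_add, ← Real.exp_add]; congr 1; ring
      have hX2 : Real.exp (-(l0 + l1) * (t - τ)) * Real.exp (-l1 * τ)
          = Real.exp (-(l0 + l1) * t) * Real.exp (l0 * τ) := by
        rw [← Real.exp_add, ← Real.exp_add]; congr 1; ring
      linear_combination (-(F0 τ) / (l0 + l1)) * hX1
        + ((l0 / l1) * F1 τ / (l0 + l1)) * hX2]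
    rw [intervalIntegral.integral_add ((h1.const_mul _).sub (h2.const_mul _))
        ((h3.const_mul _).add (h4.const_mul _)),
      intervalIntegral.integral_sub (h1.const_mul _) (h2.const_mul _),
      intervalIntegral.integral_add (h3.const_mul _) (h4.const_mul _),
      intervalIntegral.integral_const_mul, intervalIntegral.integral_const_mul,
      intervalIntegral.integral_const_mul, intervalIntegral.integral_const_mul]
    rfl
  rw [heq0' t ht, main, hsplit]
  have hE : Real.exp ((l0 + l1) * t) = Real.exp (l0 * t) * Real.exp (l1 * t) := by
    rw [← Real.exp_add, add_mul]
  unfold Ahat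
  simp only [neg_mul, Real.exp_neg]
  rw [hE]
  field_simp
  ring


/-- Theorem 2.1 (deterministic Volterra form): the renewal representation of the
solution of the coupled Kac–Lévy renewal equations via the matrix kernel `B`. -/
theorem kac_levy_renewal_representation
    (l0 l1 : ℝ) (hl0 : 0 < l0) (hl1 : 0 < l1)
    (F0 F1 p0 p1 : ℝ → ℝ)
    (hF0 : ContinuousOn F0 (Set.Ici 0)) (hF1 : ContinuousOn F1 (Set.Ici 0))
    (hp0 : ContinuousOn p0 (Set.Ici 0)) (hp1 : ContinuousOn p1 (Set.Ici 0))
    (B00 B01 B10 B11 : ℝ → ℝ)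
    (hB00 : ∀ s, B00 s = (1 - Real.exp (-(l0 + l1) * s)) / (l0 + l1))
    (hB01 : ∀ s, B01 s = (1 + (l0 / l1) * Real.exp (-(l0 + l1) * s)) / (l0 + l1))
    (hB10 : ∀ s, B10 s = (1 + (l1 / l0) * Real.exp (-(l0 + l1) * s)) / (l0 + l1))
    (hB11 : ∀ s, B11 s = (1 - Real.exp (-(l0 + l1) * s)) / (l0 + l1))
    (heq0 : ∀ t, 0 ≤ t →
      p0 t = Real.exp (-l0 * t) * F0 t
        + ∫ τ in (0:ℝ)..t, l0 * Real.exp (-l0 * τ) * p1 (t - τ))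
    (heq1 : ∀ t, 0 ≤ t →
      p1 t = Real.exp (-l1 * t) * F1 t
        + ∫ τ in (0:ℝ)..t, l1 * Real.exp (-l1 * τ) * p0 (t - τ)) :
    (∀ t, 0 ≤ t →
      p0 t = Real.exp (-l0 * t) * F0 t
        + l0 * l1 * ∫ τ in (0:ℝ)..t,
            (B00 (t - τ) * Real.exp (-l0 * τ) * F0 τ
              + B01 (t - τ) * Real.exp (-l1 * τ) * F1 τ)) ∧
    (∀ t, 0 ≤ t →
      p1 t = Real.exp (-l1 * t) * F1 t
        + l0 * l1 * ∫ τ in (0:ℝ)..t,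
            (B10 (t - τ) * Real.exp (-l0 * τ) * F0 τ
              + B11 (t - τ) * Real.exp (-l1 * τ) * F1 τ)) := by
  have hmax : Continuous fun u : ℝ => max u 0 := continuous_id.max continuous_const
  have hmem : ∀ u : ℝ, max u 0 ∈ Set.Ici (0:ℝ) := fun u => Set.mem_Ici.2 (le_max_right _ _)
  set G0 : ℝ → ℝ := fun u => F0 (max u 0) with hG0def
  set G1 : ℝ → ℝ := fun u => F1 (max u 0) with hG1def
  set q0 : ℝ → ℝ := fun u => p0 (max u 0) with hq0def
  set q1 : ℝ → ℝ := fun u => p1 (max u 0) with hq1def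
  have hG0 : Continuous G0 := hF0.comp_continuous hmax hmem
  have hG1 : Continuous G1 := hF1.comp_continuous hmax hmem
  have hq0 : Continuous q0 := hp0.comp_continuous hmax hmem
  have hq1 : Continuous q1 := hp1.comp_continuous hmax hmem
  have hG0eq : ∀ u : ℝ, 0 ≤ u → G0 u = F0 u := fun u hu => by
    rw [hG0def]; simp [max_eq_left hu]
  have hG1eq : ∀ u : ℝ, 0 ≤ u → G1 u = F1 u := fun u hu => by
    rw [hG1def]; simp [max_eq_left hu]
  have hq0eq : ∀ u : ℝ, 0 ≤ u → q0 u = p0 u := fun u hu => by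
    rw [hq0def]; simp [max_eq_left hu]
  have hq1eq : ∀ u : ℝ, 0 ≤ u → q1 u = p1 u := fun u hu => by
    rw [hq1def]; simp [max_eq_left hu]
  have heq0' : ∀ u, 0 ≤ u → q0 u = Real.exp (-l0 * u) * G0 u
      + ∫ τ in (0:ℝ)..u, l0 * Real.exp (-l0 * τ) * q1 (u - τ) := by
    intro u hu
    rw [hq0eq u hu, hG0eq u hu, heq0 u hu]
    congr 1
    apply intervalIntegral.integral_congr
    intro τ hτ
    rw [Set.uIcc_of_le hu] at hτ
    simp only [hq1eq (u - τ) (by linarith [hτ.2] : (0:ℝ) ≤ u - τ)]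
  have heq1' : ∀ u, 0 ≤ u → q1 u = Real.exp (-l1 * u) * G1 u
      + ∫ τ in (0:ℝ)..u, l1 * Real.exp (-l1 * τ) * q0 (u - τ) := by
    intro u hu
    rw [hq1eq u hu, hG1eq u hu, heq1 u hu]
    congr 1
    apply intervalIntegral.integral_congr
    intro τ hτ
    rw [Set.uIcc_of_le hu] at hτ
    simp only [hq0eq (u - τ) (by linarith [hτ.2] : (0:ℝ) ≤ u - τ)]
  have hk1 := key l0 l1 hl0 hl1 G0 G1 q0 q1 hG0 hG1 hq0 hq1 heq0' heq1'
  have hk2 := key l1 l0 hl1 hl0 G1 G0 q1 q0 hG1 hG0 hq1 hq0 heq1' heq0'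
  constructor
  · intro t ht
    simp only [hB00, hB01]
    have h := hk1 t ht
    rw [hq0eq t ht, hG0eq t ht] at h
    rw [h]
    congr 2
    apply intervalIntegral.integral_congr
    intro τ hτ
    rw [Set.uIcc_of_le ht] at hτ
    simp only [hG0eq τ hτ.1, hG1eq τ hτ.1]
  · intro t ht
    simp only [hB10, hB11]
    have h := hk2 t ht
    rw [hq1eq t ht, hG1eq t ht] at h
    rw [h]
    congr 1
    rw [mul_comm l1 l0]
    congr 1
    apply intervalIntegral.integral_congr
    intro τ hτ
    rw [Set.uIcc_of_le ht] at hτ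
    simp only [hG0eq τ hτ.1, hG1eq τ hτ.1, add_comm l1 l0]
    ring
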